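/- arXiv:0706.2679 — 3 statements merged into one kernel-verified Lean document; each statement's English description precedes it below -/
import Mathlib

section
/- Let X be a real random variable with sup_x P(|X - x| ≤ 1) ≤ 1 - p for some p ∈ (0,1], and let X' be an independent copy of X. Then P(|X - X'| ≥ 2) ≥ p^2/2. -/
open MeasureTheory ProbabilityTheory Set

/-- If `Q(X) ≤ 1 - p` and `X'` is an independent copy of `X`, then
`P(|X - X'| ≥ 2) ≥ p²/2`. -/
theorem symmetrization_spread {Ω : Type*} [MeasurableSpace Ω] (μ : Measure Ω)
    [IsProbabilityMeasure μ] (X X' : Ω → ℝ) (hX : Measurable X) (hX' : Measurable X')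
    (hindep : IndepFun X X' μ) (hid : Measure.map X μ = Measure.map X' μ)
    (p : ℝ) (hp0 : 0 < p) (hp1 : p ≤ 1)
    (hconc : ∀ x : ℝ, (μ {ω | |X ω - x| ≤ 1}).toReal ≤ 1 - p) :
    p ^ 2 / 2 ≤ (μ {ω | 2 ≤ |X ω - X' ω|}).toReal := by
  have hfin : ∀ s : Set Ω, μ s ≠ ⊤ := fun s => measure_ne_top μ s
  have hp2 : 0 < p / 2 := by linarith
  have hp2' : p / 2 < 1 := by linarith
  set g : ℝ → ℝ := fun x => (μ {ω | X ω ≤ x}).toReal with hgdef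
  have hmono : Monotone g := by
    intro x y hxy
    exact ENNReal.toReal_mono (hfin _) (measure_mono fun ω h => le_trans h hxy)
  set S : Set ℝ := {x | p / 2 ≤ g x} with hSdef
  -- S is nonempty
  have hSne : S.Nonempty := by
    by_contra h
    have hall : ∀ x : ℝ, g x < p / 2 := by
      intro x
      by_contra hx
      push_neg at hx
      exact h ⟨x, hx⟩
    have hU : (⋃ n : ℕ, {ω | X ω ≤ (n : ℝ)}) = (univ : Set Ω) := by
      ext ω
      simp only [mem_iUnion, mem_setOf_eq, mem_univ, iff_true]
      obtain ⟨n, hn⟩ := exists_nat_ge (X ω)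
      exact ⟨n, hn⟩
    have hm : Monotone (fun n : ℕ => {ω | X ω ≤ (n : ℝ)}) := by
      intro m n hmn ω hω
      simp only [mem_setOf_eq] at hω ⊢
      have : (m : ℝ) ≤ n := by exact_mod_cast hmn
      linarith
    have h1 : μ (univ : Set Ω) = ⨆ n : ℕ, μ {ω | X ω ≤ (n : ℝ)} := by
      rw [← hU]; exact hm.measure_iUnion
    have h2 : (⨆ n : ℕ, μ {ω | X ω ≤ (n : ℝ)}) ≤ ENNReal.ofReal (p / 2) := by
      refine iSup_le fun n => ?_
      rw [ENNReal.le_ofReal_iff_toReal_le (hfin _) hp2.le]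
      exact (hall n).le
    rw [measure_univ] at h1
    have := h1 ▸ h2
    exact absurd (lt_of_le_of_lt this (ENNReal.ofReal_lt_one.mpr hp2')) (lt_irrefl _)
  -- S is bounded below
  have hSbdd : BddBelow S := by
    have hI : (⋂ n : ℕ, {ω | X ω ≤ -(n : ℝ)}) = (∅ : Set Ω) := by
      ext ω
      simp only [mem_iInter, mem_setOf_eq, mem_empty_iff_false, iff_false]
      push_neg
      obtain ⟨n, hn⟩ := exists_nat_gt (-X ω)
      exact ⟨n, by linarith⟩
    have hanti : Antitone (fun n : ℕ => {ω | X ω ≤ -(n : ℝ)}) := by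
      intro m n hmn ω hω
      simp only [mem_setOf_eq] at hω ⊢
      have : (m : ℝ) ≤ n := by exact_mod_cast hmn
      linarith
    have h1 : μ (∅ : Set Ω) = ⨅ n : ℕ, μ {ω | X ω ≤ -(n : ℝ)} := by
      rw [← hI]
      exact hanti.measure_iInter
        (fun n => (hX measurableSet_Iic).nullMeasurableSet) ⟨0, hfin _⟩
    rw [measure_empty] at h1
    by_contra hb
    have hge : ∀ n : ℕ, ENNReal.ofReal (p / 2) ≤ μ {ω | X ω ≤ -(n : ℝ)} := by
      intro n
      have : ∃ x ∈ S, x ≤ -(n : ℝ) := by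
        by_contra hc
        push_neg at hc
        exact hb ⟨-(n : ℝ), fun x hx => (hc x hx).le⟩
      obtain ⟨x, hxS, hxle⟩ := this
      have : p / 2 ≤ g (-(n : ℝ)) := le_trans hxS (hmono hxle)
      rw [ENNReal.ofReal_le_iff_le_toReal (hfin _)]
      exact this
    have : ENNReal.ofReal (p / 2) ≤ 0 := h1 ▸ le_iInf hge
    simp only [nonpos_iff_eq_zero, ENNReal.ofReal_eq_zero] at this
    linarith
  set a : ℝ := sInf S with hadef
  -- right-continuity: p/2 ≤ g a
  have hqa : p / 2 ≤ g a := by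
    have hseteq : {ω | X ω ≤ a} = ⋂ n : ℕ, {ω | X ω ≤ a + 1 / ((n : ℝ) + 1)} := by
      ext ω
      simp only [mem_iInter, mem_setOf_eq]
      constructor
      · intro h n
        have : (0 : ℝ) < 1 / ((n : ℝ) + 1) := by positivity
        linarith
      · intro h
        by_contra hc
        push_neg at hc
        obtain ⟨n, hn⟩ := exists_nat_one_div_lt (sub_pos.mpr hc)
        have := h n
        linarith
    have hanti : Antitone (fun n : ℕ => {ω | X ω ≤ a + 1 / ((n : ℝ) + 1)}) := by
      intro m n hmn ω hω
      simp only [mem_setOf_eq] at hω ⊢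
      have h1 : ((m : ℝ) + 1) ≤ (n : ℝ) + 1 := by exact_mod_cast Nat.add_le_add_right hmn 1
      have := one_div_le_one_div_of_le (by positivity : (0:ℝ) < (m : ℝ) + 1) h1
      linarith
    have h1 : μ {ω | X ω ≤ a} = ⨅ n : ℕ, μ {ω | X ω ≤ a + 1 / ((n : ℝ) + 1)} := by
      rw [hseteq]
      exact hanti.measure_iInter
        (fun n => (hX measurableSet_Iic).nullMeasurableSet) ⟨0, hfin _⟩
    have h2 : ∀ n : ℕ, ENNReal.ofReal (p / 2) ≤ μ {ω | X ω ≤ a + 1 / ((n : ℝ) + 1)} := by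
      intro n
      have hgt : a < a + 1 / ((n : ℝ) + 1) := by
        have : (0 : ℝ) < 1 / ((n : ℝ) + 1) := by positivity
        linarith
      obtain ⟨x, hxS, hxlt⟩ := (csInf_lt_iff hSbdd hSne).mp hgt
      have : p / 2 ≤ g (a + 1 / ((n : ℝ) + 1)) := le_trans hxS (hmono hxlt.le)
      rw [ENNReal.ofReal_le_iff_le_toReal (hfin _)]
      exact this
    have h3 : ENNReal.ofReal (p / 2) ≤ μ {ω | X ω ≤ a} := h1 ▸ le_iInf h2
    rw [ENNReal.ofReal_le_iff_le_toReal (hfin _)] at h3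
    exact h3
  -- left tail: μ {X < a} ≤ p/2
  have hlt : (μ {ω | X ω < a}).toReal ≤ p / 2 := by
    have hseteq : {ω | X ω < a} = ⋃ n : ℕ, {ω | X ω ≤ a - 1 / ((n : ℝ) + 1)} := by
      ext ω
      simp only [mem_iUnion, mem_setOf_eq]
      constructor
      · intro h
        obtain ⟨n, hn⟩ := exists_nat_one_div_lt (sub_pos.mpr h)
        exact ⟨n, by linarith⟩
      · rintro ⟨n, hn⟩
        have : (0 : ℝ) < 1 / ((n : ℝ) + 1) := by positivity
        linarith
    have hm : Monotone (fun n : ℕ => {ω | X ω ≤ a - 1 / ((n : ℝ) + 1)}) := by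
      intro m n hmn ω hω
      simp only [mem_setOf_eq] at hω ⊢
      have h1 : ((m : ℝ) + 1) ≤ (n : ℝ) + 1 := by exact_mod_cast Nat.add_le_add_right hmn 1
      have := one_div_le_one_div_of_le (by positivity : (0:ℝ) < (m : ℝ) + 1) h1
      linarith
    have h1 : μ {ω | X ω < a} = ⨆ n : ℕ, μ {ω | X ω ≤ a - 1 / ((n : ℝ) + 1)} := by
      rw [hseteq]; exact hm.measure_iUnion
    have h2 : ∀ n : ℕ, μ {ω | X ω ≤ a - 1 / ((n : ℝ) + 1)} ≤ ENNReal.ofReal (p / 2) := by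
      intro n
      have hlt' : a - 1 / ((n : ℝ) + 1) < a := by
        have : (0 : ℝ) < 1 / ((n : ℝ) + 1) := by positivity
        linarith
      have hnotS : a - 1 / ((n : ℝ) + 1) ∉ S := fun hmem =>
        absurd (csInf_le hSbdd hmem) (not_le.mpr hlt')
      rw [hSdef, mem_setOf_eq, not_le] at hnotS
      rw [ENNReal.le_ofReal_iff_toReal_le (hfin _) hp2.le]
      exact hnotS.le
    have h3 : μ {ω | X ω < a} ≤ ENNReal.ofReal (p / 2) := h1 ▸ iSup_le h2
    calc (μ {ω | X ω < a}).toReal ≤ (ENNReal.ofReal (p / 2)).toReal :=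
          ENNReal.toReal_mono ENNReal.ofReal_ne_top h3
      _ = p / 2 := ENNReal.toReal_ofReal hp2.le
  -- right tail: p/2 ≤ μ {a + 2 < X}
  have hra : p / 2 ≤ (μ {ω | a + 2 < X ω}).toReal := by
    have hcover : (univ : Set Ω) ⊆
        {ω | X ω < a} ∪ ({ω | |X ω - (a + 1)| ≤ 1} ∪ {ω | a + 2 < X ω}) := by
      intro ω _
      rcases lt_or_ge (X ω) a with h | h
      · exact Or.inl h
      · rcases le_or_gt (X ω) (a + 2) with h' | h'
        · refine Or.inr (Or.inl ?_)
          simp only [mem_setOf_eq, abs_le]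
          constructor <;> linarith
        · exact Or.inr (Or.inr h')
    have hμ : μ (univ : Set Ω) ≤ μ {ω | X ω < a} + (μ {ω | |X ω - (a + 1)| ≤ 1}
        + μ {ω | a + 2 < X ω}) :=
      le_trans (measure_mono hcover)
        (le_trans (measure_union_le _ _) (by gcongr; exact measure_union_le _ _))
    have h1 : (1 : ℝ) ≤ (μ {ω | X ω < a}).toReal + ((μ {ω | |X ω - (a + 1)| ≤ 1}).toReal
        + (μ {ω | a + 2 < X ω}).toReal) := by
      have := ENNReal.toReal_mono (by finiteness) hμ
      rwa [measure_univ, ENNReal.toReal_one, ENNReal.toReal_add (hfin _) (by finiteness),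
        ENNReal.toReal_add (hfin _) (hfin _)] at this
    have h2 := hconc (a + 1)
    linarith
  -- independence step
  set q : ENNReal := μ {ω | X ω ≤ a} with hq
  set r : ENNReal := μ {ω | a + 2 < X ω} with hr
  have hmapIic : μ (X' ⁻¹' Iic a) = q := by
    rw [← Measure.map_apply hX' measurableSet_Iic, ← hid,
      Measure.map_apply hX measurableSet_Iic]
    rfl
  have hmapIoi : μ (X' ⁻¹' Ioi (a + 2)) = r := by
    rw [← Measure.map_apply hX' measurableSet_Ioi, ← hid,
      Measure.map_apply hX measurableSet_Ioi]
    rfl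
  have hE1 : μ (X ⁻¹' Ioi (a + 2) ∩ X' ⁻¹' Iic a) = r * q := by
    rw [hindep.measure_inter_preimage_eq_mul _ _ measurableSet_Ioi measurableSet_Iic, hmapIic]
    rfl
  have hE2 : μ (X ⁻¹' Iic a ∩ X' ⁻¹' Ioi (a + 2)) = q * r := by
    rw [hindep.measure_inter_preimage_eq_mul _ _ measurableSet_Iic measurableSet_Ioi, hmapIoi]
    rfl
  -- the two events are disjoint subsets of the target
  have hsub : (X ⁻¹' Ioi (a + 2) ∩ X' ⁻¹' Iic a) ∪ (X ⁻¹' Iic a ∩ X' ⁻¹' Ioi (a + 2))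
      ⊆ {ω | 2 ≤ |X ω - X' ω|} := by
    rintro ω (⟨h1, h2⟩ | ⟨h1, h2⟩)
    · simp only [mem_preimage, mem_Ioi, mem_Iic] at h1 h2
      have h : 2 ≤ X ω - X' ω := by linarith
      show 2 ≤ |X ω - X' ω|
      exact le_trans h (le_abs_self _)
    · simp only [mem_preimage, mem_Ioi, mem_Iic] at h1 h2
      have h : 2 ≤ X' ω - X ω := by linarith
      show 2 ≤ |X ω - X' ω|
      rw [abs_sub_comm]
      exact le_trans h (le_abs_self _)
  have hdisj : Disjoint (X ⁻¹' Ioi (a + 2) ∩ X' ⁻¹' Iic a)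
      (X ⁻¹' Iic a ∩ X' ⁻¹' Ioi (a + 2)) := by
    rw [Set.disjoint_left]
    rintro ω ⟨h1, _⟩ ⟨h3, _⟩
    simp only [mem_preimage, mem_Ioi, mem_Iic] at h1 h3
    linarith
  have hmeas2 : MeasurableSet (X ⁻¹' Iic a ∩ X' ⁻¹' Ioi (a + 2)) :=
    (hX measurableSet_Iic).inter (hX' measurableSet_Ioi)
  have hsum : r * q + q * r ≤ μ {ω | 2 ≤ |X ω - X' ω|} := by
    rw [← hE1, ← hE2, ← measure_union hdisj hmeas2]
    exact measure_mono hsub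
  have hfinal : (r * q + q * r).toReal ≤ (μ {ω | 2 ≤ |X ω - X' ω|}).toReal :=
    ENNReal.toReal_mono (hfin _) hsum
  rw [ENNReal.toReal_add (by finiteness) (by finiteness), ENNReal.toReal_mul,
    ENNReal.toReal_mul] at hfinal
  have hq2 : p / 2 ≤ q.toReal := hqa
  have hr2 : p / 2 ≤ r.toReal := hra
  nlinarith [hq2, hr2, hp2.le]
end

section
/- Let X_1, …, X_n be i.i.d. real random variables with common characteristic function φ. Then for every x ∈ ℝ and real coefficients a_1, …, a_n, P(|Σ_k a_k X_k − x| ≤ 1) ≤ e · (1/√π) ∫_{−∞}^{∞} Π_{k=1}^n |φ(2 a_k η)| · exp(−η^2) dη. -/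
open MeasureTheory ProbabilityTheory Real

lemma my_abs_exp_I_mul (t r : ℝ) :
    ‖Complex.exp (Complex.I * t * r)‖ = 1 := by
  rw [show (Complex.I * t * r : ℂ) = ((t * r : ℝ) : ℂ) * Complex.I by push_cast; ring,
    Complex.norm_exp_ofReal_mul_I]

lemma my_indepFun_integral_mul {Ω : Type*} [MeasurableSpace Ω] {μ : Measure Ω}
    [IsProbabilityMeasure μ] {f g : Ω → ℂ} (h : IndepFun f g μ)
    (hf : Measurable f) (hg : Measurable g) :
    ∫ ω, f ω * g ω ∂μ = (∫ ω, f ω ∂μ) * ∫ ω, g ω ∂μ := by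
  have hmap := (indepFun_iff_map_prod_eq_prod_map_map hf.aemeasurable hg.aemeasurable).mp h
  haveI : IsProbabilityMeasure (μ.map f) := Measure.isProbabilityMeasure_map hf.aemeasurable
  haveI : IsProbabilityMeasure (μ.map g) := Measure.isProbabilityMeasure_map hg.aemeasurable
  have h1 : ∫ ω, f ω * g ω ∂μ
      = ∫ p : ℂ × ℂ, p.1 * p.2 ∂(μ.map (fun ω => (f ω, g ω))) := by
    rw [integral_map (f := fun p : ℂ × ℂ => p.1 * p.2) (hf.prodMk hg).aemeasurable
      (measurable_fst.mul measurable_snd).aestronglyMeasurable]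
  have e1 : ∫ z : ℂ, z ∂(μ.map f) = ∫ ω, f ω ∂μ :=
    integral_map hf.aemeasurable aestronglyMeasurable_id
  have e2 : ∫ z : ℂ, z ∂(μ.map g) = ∫ ω, g ω ∂μ :=
    integral_map hg.aemeasurable aestronglyMeasurable_id
  rw [h1, hmap, integral_prod_mul (fun z : ℂ => z) (fun z : ℂ => z), e1, e2]

lemma my_iIndep_integral_prod {Ω : Type*} [MeasurableSpace Ω] {μ : Measure Ω}
    [IsProbabilityMeasure μ] {n : ℕ} {Y : Fin n → Ω → ℂ}
    (h : iIndepFun Y μ) (hm : ∀ i, Measurable (Y i))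
    (s : Finset (Fin n)) :
    ∫ ω, ∏ i ∈ s, Y i ω ∂μ = ∏ i ∈ s, ∫ ω, Y i ω ∂μ := by
  classical
  induction s using Finset.induction_on with
  | empty => simp
  | @insert i s hi ih =>
    have hindep : IndepFun (∏ j ∈ s, Y j) (Y i) μ :=
      h.indepFun_finsetProd_of_notMem hm hi
    have hmprod : Measurable (∏ j ∈ s, Y j) := by
      have := Finset.measurable_prod s (fun j (_ : j ∈ s) => hm j)
      simpa [Finset.prod_fn] using this
    calc ∫ ω, ∏ j ∈ insert i s, Y j ω ∂μ
        = ∫ ω, (∏ j ∈ s, Y j) ω * Y i ω ∂μ := by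
          congr 1; ext ω; simp [Finset.prod_insert hi, Finset.prod_apply, mul_comm]
      _ = (∫ ω, (∏ j ∈ s, Y j) ω ∂μ) * ∫ ω, Y i ω ∂μ :=
          my_indepFun_integral_mul hindep hmprod (hm i)
      _ = ∏ j ∈ insert i s, ∫ ω, Y j ω ∂μ := by
          simp only [Finset.prod_apply] at *
          rw [ih, Finset.prod_insert hi, mul_comm]

lemma my_gauss (y : ℝ) :
    ∫ η : ℝ, Complex.exp (Complex.I * (2 * y) * η) * Complex.exp (-(η:ℂ) ^ 2)
      = (Real.sqrt π : ℂ) * Complex.exp (-(y:ℂ) ^ 2) := by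
  have h := fourierIntegral_gaussian (b := 1) (by norm_num) (2 * y : ℂ)
  have h1 : ∀ η : ℝ, Complex.exp (-(1:ℂ) * (η:ℂ) ^ 2) = Complex.exp (-(η:ℂ) ^ 2) := by
    intro η; ring_nf
  simp only [h1] at h
  rw [h]
  congr 1
  · rw [div_one, show ((1:ℂ)/2) = ((1/2 : ℝ) : ℂ) by norm_num,
      ← Complex.ofReal_cpow pi_nonneg]
    norm_num [Real.sqrt_eq_rpow]
  · congr 1; ring

/-- For i.i.d. `X₁,…,Xₙ` with characteristic function `φ`,
`P(|Σ aₖ Xₖ − x| ≤ 1) ≤ e·(1/√π)·∫ Πₖ |φ(2aₖη)| e^{−η²} dη`. -/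
theorem conc_le_char_integral {Ω : Type*} [MeasurableSpace Ω] (μ : Measure Ω)
    [IsProbabilityMeasure μ] (n : ℕ) (X : Fin n → Ω → ℝ)
    (hmeas : ∀ k, Measurable (X k))
    (hindep : iIndepFun X μ)
    (hid : ∀ k l, Measure.map (X k) μ = Measure.map (X l) μ)
    (φ : ℝ → ℂ)
    (hφ : ∀ k (t : ℝ), φ t = ∫ ω, Complex.exp (Complex.I * t * X k ω) ∂μ)
    (a : Fin n → ℝ) (x : ℝ) :
    (μ {ω | |∑ k, a k * X k ω - x| ≤ 1}).toReal ≤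
      Real.exp 1 * ((Real.sqrt Real.pi)⁻¹ *
        ∫ η : ℝ, (∏ k, ‖φ (2 * a k * η)‖) * Real.exp (-η ^ 2)) := by
  classical
  set S : Ω → ℝ := fun ω => ∑ k, a k * X k ω - x with hS
  set g : ℝ → ℝ := fun η => (∏ k, ‖φ (2 * a k * η)‖) * Real.exp (-η ^ 2) with hg
  have hSm : Measurable S := by
    apply Measurable.sub _ measurable_const
    exact Finset.measurable_sum _ fun k _ => (hmeas k).const_mul _
  have hAmeas : MeasurableSet {ω | |S ω| ≤ 1} := measurableSet_le hSm.abs measurable_const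
  have hgoal : {ω | |∑ k, a k * X k ω - x| ≤ 1} = {ω | |S ω| ≤ 1} := rfl
  -- |φ| ≤ 1
  have hb1 : ∀ (k : Fin n) (t : ℝ), ‖φ t‖ ≤ 1 := by
    intro k t
    rw [hφ k t]
    calc ‖∫ ω, Complex.exp (Complex.I * t * X k ω) ∂μ‖
        ≤ ∫ ω, ‖Complex.exp (Complex.I * t * X k ω)‖ ∂μ := norm_integral_le_integral_norm _
      _ = 1 := by
          simp only [my_abs_exp_I_mul]
          simp
  have hprodle : ∀ η : ℝ, (∏ k, ‖φ (2 * a k * η)‖) ≤ 1 := by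
    intro η
    exact Finset.prod_le_one (fun k _ => norm_nonneg _) (fun k _ => hb1 k _)
  have hprodnn : ∀ η : ℝ, 0 ≤ ∏ k, ‖φ (2 * a k * η)‖ :=
    fun η => Finset.prod_nonneg fun k _ => norm_nonneg _
  -- measurability of g
  have hgm : Measurable g := by
    rcases Nat.eq_zero_or_pos n with hn | hn
    · subst hn
      have : Measurable fun η : ℝ => Real.exp (-η ^ 2) :=
        ((measurable_id.pow_const 2).neg).exp
      simpa [hg] using this
    · have k0 : Fin n := ⟨0, hn⟩
      have hφm : Measurable φ := by
        have hm1 : StronglyMeasurable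
            (fun t : ℝ => ∫ ω, Complex.exp (Complex.I * t * X k0 ω) ∂μ) := by
          apply MeasureTheory.StronglyMeasurable.integral_prod_right'
            (f := fun p : ℝ × Ω => Complex.exp (Complex.I * p.1 * X k0 p.2))
          apply Measurable.stronglyMeasurable
          apply Complex.measurable_exp.comp
          exact ((Complex.measurable_ofReal.comp measurable_fst).const_mul Complex.I).mul
            (Complex.measurable_ofReal.comp ((hmeas k0).comp measurable_snd))
        have : φ = fun t : ℝ => ∫ ω, Complex.exp (Complex.I * t * X k0 ω) ∂μ :=
          funext (hφ k0)
        rw [this]; exact hm1.measurable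
      rw [hg]
      apply Measurable.mul
      · apply Finset.measurable_prod
        intro k _
        exact continuous_norm.measurable.comp (hφm.comp (measurable_id.const_mul (2 * a k)))
      · exact ((measurable_id.pow_const 2).neg).exp
  have hgaussint : Integrable (fun η : ℝ => Real.exp (-η ^ 2)) volume := by
    simpa using integrable_exp_neg_mul_sq (b := 1) one_pos
  have hgint : Integrable g volume := by
    refine Integrable.mono' hgaussint hgm.aestronglyMeasurable
      (Filter.Eventually.of_forall fun η => ?_)
    rw [Real.norm_eq_abs, abs_of_nonneg (mul_nonneg (hprodnn η) (Real.exp_pos _).le)]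
    exact mul_le_of_le_one_left (Real.exp_pos _).le (hprodle η)
  -- Step 1 : P ≤ e * E where E = ∫ exp(-(S ω)^2)
  have hexpint : Integrable (fun ω => Real.exp (-(S ω) ^ 2)) μ := by
    refine Integrable.mono' (integrable_const 1) ?_
      (Filter.Eventually.of_forall fun ω => ?_)
    · exact (((hSm.pow_const 2).neg).exp).aestronglyMeasurable
    · rw [Real.norm_eq_abs, abs_of_nonneg (Real.exp_pos _).le]
      exact Real.exp_le_one_iff.2 (neg_nonpos.2 (sq_nonneg _))
  have step1 : (μ {ω | |S ω| ≤ 1}).toReal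
      ≤ Real.exp 1 * ∫ ω, Real.exp (-(S ω) ^ 2) ∂μ := by
    have hmono : ∫ ω, Set.indicator {ω | |S ω| ≤ 1} (fun _ => Real.exp (-1)) ω ∂μ
        ≤ ∫ ω, Real.exp (-(S ω) ^ 2) ∂μ := by
      refine integral_mono ((integrable_const _).indicator hAmeas) hexpint fun ω => ?_
      by_cases hω : ω ∈ {ω | |S ω| ≤ 1}
      · rw [Set.indicator_of_mem hω]
        apply Real.exp_le_exp.2
        have h1 : |S ω| ≤ 1 := hω
        nlinarith [abs_nonneg (S ω), sq_abs (S ω)]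
      · rw [Set.indicator_of_notMem hω]
        positivity
    rw [integral_indicator_const _ hAmeas, smul_eq_mul] at hmono
    have hee : Real.exp 1 * Real.exp (-1) = 1 := by
      rw [← Real.exp_add]; norm_num
    have h2 := mul_le_mul_of_nonneg_left hmono (Real.exp_pos 1).le
    calc (μ {ω | |S ω| ≤ 1}).toReal
        = Real.exp 1 * ((μ {ω | |S ω| ≤ 1}).toReal * Real.exp (-1)) := by
          rw [mul_comm ((μ {ω | |S ω| ≤ 1}).toReal), ← mul_assoc, hee, one_mul]
      _ ≤ Real.exp 1 * ∫ ω, Real.exp (-(S ω) ^ 2) ∂μ := h2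
  -- characteristic function of 2ηS
  have hchar : ∀ η : ℝ, ∫ ω, Complex.exp (Complex.I * (2 * S ω) * η) ∂μ
      = Complex.exp (-(Complex.I * (2 * x) * η)) * ∏ k, φ (2 * a k * η) := by
    intro η
    have hYm : ∀ k : Fin n,
        Measurable (fun ω => Complex.exp (Complex.I * (2 * a k * η) * X k ω)) := fun k =>
      Complex.measurable_exp.comp
        ((Complex.measurable_ofReal.comp (hmeas k)).const_mul _)
    have hYindep : iIndepFun
        (fun k ω => Complex.exp (Complex.I * (2 * a k * η) * X k ω)) μ := by
      apply hindep.comp (g := fun k (y : ℝ) => Complex.exp (Complex.I * (2 * a k * η) * y))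
      intro k
      exact Complex.measurable_exp.comp (Complex.measurable_ofReal.const_mul _)
    have hsplit : ∀ ω, Complex.exp (Complex.I * (2 * S ω) * η)
        = Complex.exp (-(Complex.I * (2 * x) * η))
          * ∏ k, Complex.exp (Complex.I * (2 * a k * η) * X k ω) := by
      intro ω
      rw [← Complex.exp_sum, ← Complex.exp_add]
      congr 1
      have hsum : (∑ k : Fin n, Complex.I * (2 * a k * η) * (X k ω))
          = Complex.I * 2 * η * ((∑ k, a k * X k ω : ℝ) : ℂ) := by
        push_cast
        rw [Finset.mul_sum]
        exact Finset.sum_congr rfl fun k _ => by ring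
      rw [hsum, hS]
      push_cast
      ring
    simp_rw [hsplit]
    rw [integral_const_mul]
    congr 1
    rw [my_iIndep_integral_prod hYindep hYm Finset.univ]
    refine Finset.prod_congr rfl fun k _ => ?_
    rw [hφ k (2 * a k * η)]
    congr 1
    funext ω
    congr 2
    push_cast
    ring
  -- the joint function
  set F : Ω → ℝ → ℂ :=
    fun ω η => Complex.exp (Complex.I * (2 * S ω) * η) * Complex.exp (-(η:ℂ) ^ 2) with hF
  have hFnorm : ∀ p : Ω × ℝ, ‖Function.uncurry F p‖ = Real.exp (-(p.2) ^ 2) := by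
    intro p
    show ‖Complex.exp (Complex.I * (2 * S p.1) * p.2) * Complex.exp (-((p.2 : ℝ):ℂ) ^ 2)‖
      = Real.exp (-(p.2) ^ 2)
    rw [norm_mul,
      show (Complex.I * (2 * S p.1) * p.2 : ℂ)
        = Complex.I * ((2 * S p.1 : ℝ) : ℂ) * ((p.2 : ℝ) : ℂ) by push_cast; ring,
      my_abs_exp_I_mul,
      show (-((p.2:ℝ):ℂ) ^ 2) = ((-(p.2) ^ 2 : ℝ) : ℂ) by push_cast; ring,
      Complex.norm_exp_ofReal, one_mul]
  have hFm : Measurable (Function.uncurry F) := by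
    apply Measurable.mul
    · apply Complex.measurable_exp.comp
      exact (((Complex.measurable_ofReal.comp (hSm.comp measurable_fst)).const_mul
        (2 : ℂ)).const_mul Complex.I).mul (Complex.measurable_ofReal.comp measurable_snd)
    · exact Complex.measurable_exp.comp
        (((Complex.measurable_ofReal.comp measurable_snd).pow_const 2).neg)
  have hFint : Integrable (Function.uncurry F) (μ.prod volume) := by
    have hprodint : Integrable (fun p : Ω × ℝ => (1 : ℝ) * Real.exp (-(p.2) ^ 2))
        (μ.prod volume) := (integrable_const (1:ℝ)).mul_prod hgaussint
    refine Integrable.mono' (by simpa using hprodint) hFm.aestronglyMeasurable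
      (Filter.Eventually.of_forall fun p => ?_)
    rw [hFnorm p]
  have hswap := integral_integral_swap (f := F) hFint
  -- inner η-integral
  have hinnerη : ∀ ω, ∫ η : ℝ, F ω η = (Real.sqrt π : ℂ) * Complex.exp (-((S ω : ℝ) : ℂ) ^ 2) :=
    fun ω => my_gauss (S ω)
  have hE0 : 0 ≤ ∫ ω, Real.exp (-(S ω) ^ 2) ∂μ := integral_nonneg fun ω => (Real.exp_pos _).le
  have hleft : ∫ ω, ∫ η : ℝ, F ω η ∂volume ∂μ
      = (Real.sqrt π : ℂ) * ((∫ ω, Real.exp (-(S ω) ^ 2) ∂μ : ℝ) : ℂ) := by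
    simp_rw [hinnerη]
    rw [integral_const_mul]
    congr 1
    have h1 : (fun ω => Complex.exp (-((S ω : ℝ) : ℂ) ^ 2))
        = fun ω => ((Real.exp (-(S ω) ^ 2) : ℝ) : ℂ) := by
      funext ω; rw [Complex.ofReal_exp]; congr 1; push_cast; ring
    rw [h1]
    have h2 := Complex.ofRealCLM.integral_comp_comm hexpint
    simpa using h2
  -- inner ω-integral
  have hFinner : ∀ η : ℝ, ∫ ω, F ω η ∂μ
      = (Complex.exp (-(Complex.I * (2 * x) * η)) * ∏ k, φ (2 * a k * η))
        * Complex.exp (-(η:ℂ) ^ 2) := by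
    intro η
    simp_rw [hF]
    rw [integral_mul_const, hchar η]
  have hbound : ∀ η : ℝ, ‖∫ ω, F ω η ∂μ‖ ≤ g η := by
    intro η
    rw [hFinner η, hg]
    have e1 : ‖Complex.exp (-(Complex.I * (2 * x) * η))‖ = 1 := by
      rw [show (-(Complex.I * (2 * (x:ℂ)) * (η:ℂ)))
          = Complex.I * ((-(2 * x) : ℝ) : ℂ) * ((η : ℝ) : ℂ) by push_cast; ring,
        my_abs_exp_I_mul]
    have e3 : ‖Complex.exp (-(η:ℂ) ^ 2)‖ = Real.exp (-η ^ 2) := by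
      rw [show (-(η:ℂ) ^ 2) = ((-η ^ 2 : ℝ) : ℂ) by push_cast; ring,
        Complex.norm_exp_ofReal]
    rw [norm_mul, norm_mul, e1, e3, one_mul, norm_prod]
  have hkey : ‖∫ η : ℝ, ∫ ω, F ω η ∂μ‖ ≤ ∫ η, g η :=
    norm_integral_le_of_norm_le hgint (Filter.Eventually.of_forall hbound)
  have hnorm_left : ‖∫ ω, ∫ η : ℝ, F ω η ∂volume ∂μ‖
      = Real.sqrt π * ∫ ω, Real.exp (-(S ω) ^ 2) ∂μ := by
    rw [hleft, norm_mul,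
      Complex.norm_real, Complex.norm_real, Real.norm_eq_abs, Real.norm_eq_abs,
      abs_of_nonneg (Real.sqrt_nonneg _), abs_of_nonneg hE0]
  have hππ : 0 < Real.sqrt π := Real.sqrt_pos.2 pi_pos
  have hmain : ∫ ω, Real.exp (-(S ω) ^ 2) ∂μ ≤ (Real.sqrt π)⁻¹ * ∫ η, g η := by
    have h3 : Real.sqrt π * ∫ ω, Real.exp (-(S ω) ^ 2) ∂μ ≤ ∫ η, g η := by
      rw [← hnorm_left, hswap]
      exact hkey
    calc ∫ ω, Real.exp (-(S ω) ^ 2) ∂μ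
        = (Real.sqrt π)⁻¹ * (Real.sqrt π * ∫ ω, Real.exp (-(S ω) ^ 2) ∂μ) := by
          field_simp
      _ ≤ (Real.sqrt π)⁻¹ * ∫ η, g η :=
          mul_le_mul_of_nonneg_left h3 (inv_nonneg.2 hππ.le)
  rw [hgoal]
  calc (μ {ω | |S ω| ≤ 1}).toReal
      ≤ Real.exp 1 * ∫ ω, Real.exp (-(S ω) ^ 2) ∂μ := step1
    _ ≤ Real.exp 1 * ((Real.sqrt π)⁻¹ * ∫ η, g η) :=
        mul_le_mul_of_nonneg_left hmain (Real.exp_pos 1).le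
end

section
/- Let X be a real random variable with characteristic function φ, X' an independent copy, X̄ = X − X', and q = P(|X̄| ≥ 2) > 0. Then for any reals b_1,…,b_n and any probability density weight, ∫_{−∞}^{∞} Π_k |φ(b_k η)| e^{−η^2} dη/√π ≤ sup_{z ≥ 2} ∫_{−∞}^{∞} exp(−(q/2) Σ_k (1 − cos(b_k η z)) − η^2) dη/√π. -/
open MeasureTheory ProbabilityTheory

/-- A measurable function bounded in absolute value is integrable on a finite measure. -/
lemma aux_integrable_of_bound {Ω : Type*} [MeasurableSpace Ω] (μ : Measure Ω)
    [IsFiniteMeasure μ] {f : Ω → ℝ} (hf : AEStronglyMeasurable f μ) (C : ℝ)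
    (h : ∀ ω, |f ω| ≤ C) : Integrable f μ :=
  (integrable_const C).mono' hf (Filter.Eventually.of_forall fun ω => by simpa using h ω)

/-- Tangent-line (Jensen) inequality for `exp` of a negated integral. -/
lemma aux_exp_neg_integral_le {Ω : Type*} [MeasurableSpace Ω] (ν : Measure Ω)
    [IsProbabilityMeasure ν] (h : Ω → ℝ) (hmeas : AEStronglyMeasurable h ν) (C : ℝ)
    (h0 : ∀ ω, 0 ≤ h ω) (hC : ∀ ω, h ω ≤ C) :
    Real.exp (-∫ ω, h ω ∂ν) ≤ ∫ ω, Real.exp (-(h ω)) ∂ν := by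
  set m : ℝ := ∫ ω, h ω ∂ν with hm
  have hint : Integrable h ν :=
    aux_integrable_of_bound ν hmeas (max C 0) fun ω =>
      (abs_le.2 ⟨by linarith [h0 ω, le_max_right C 0], le_max_of_le_left (hC ω)⟩)
  have hexpint : Integrable (fun ω => Real.exp (-(h ω))) ν :=
    aux_integrable_of_bound ν
      ((Real.continuous_exp.measurable.comp_aemeasurable hmeas.aemeasurable.neg).aestronglyMeasurable) 1
      (fun ω => by
        rw [abs_of_pos (Real.exp_pos _)]
        exact Real.exp_le_one_iff.2 (by linarith [h0 ω]))
  have key : ∀ ω, Real.exp (-m) + Real.exp (-m) * (m - h ω) ≤ Real.exp (-(h ω)) := by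
    intro ω
    have h1 : (m - h ω) + 1 ≤ Real.exp (m - h ω) := Real.add_one_le_exp _
    have h2 : Real.exp (-(h ω)) = Real.exp (-m) * Real.exp (m - h ω) := by
      rw [← Real.exp_add]; ring_nf
    rw [h2]
    nlinarith [Real.exp_pos (-m)]
  have hleft : Integrable (fun ω => Real.exp (-m) + Real.exp (-m) * (m - h ω)) ν := by
    exact (integrable_const _).add (((integrable_const m).sub hint).const_mul _)
  calc Real.exp (-m) = ∫ ω, (Real.exp (-m) + Real.exp (-m) * (m - h ω)) ∂ν := by
        have : Integrable (fun ω => m - h ω) ν := (integrable_const m).sub hint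
        rw [integral_add (integrable_const _) (this.const_mul _),
          integral_const, integral_const_mul, integral_sub (integrable_const m) hint,
          integral_const]
        simp [← hm]
    _ ≤ ∫ ω, Real.exp (-(h ω)) ∂ν := integral_mono hleft hexpint key

set_option maxHeartbeats 1000000 in
/-- Step 2 bound: the characteristic-function integral is bounded by the supremum over
`z ≥ 2` of the corresponding cosine-sum integral. -/
theorem char_integral_le_sup_cos {Ω : Type*} [MeasurableSpace Ω] (μ : Measure Ω)
    [IsProbabilityMeasure μ] (X X' : Ω → ℝ) (hX : Measurable X) (hX' : Measurable X')
    (hindep : IndepFun X X' μ) (hid : Measure.map X μ = Measure.map X' μ)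
    (φ : ℝ → ℂ) (hφ : ∀ t : ℝ, φ t = ∫ ω, Complex.exp (Complex.I * t * X ω) ∂μ)
    (hq : 0 < (μ {ω | 2 ≤ |X ω - X' ω|}).toReal)
    (n : ℕ) (b : Fin n → ℝ) :
    (∫ η : ℝ, (∏ k, ‖φ (b k * η)‖) * Real.exp (-η ^ 2) /
        Real.sqrt Real.pi) ≤
      ⨆ z : {z : ℝ // 2 ≤ z},
        ∫ η : ℝ,
          Real.exp (-((μ {ω | 2 ≤ |X ω - X' ω|}).toReal / 2 *
              ∑ k, (1 - Real.cos (b k * η * (z : ℝ)))) - η ^ 2) /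
            Real.sqrt Real.pi := by
  -- notation
  set A : Set Ω := {ω | 2 ≤ |X ω - X' ω|} with hA_def
  have hA : MeasurableSet A := measurableSet_le measurable_const (hX.sub hX').abs
  set q : ℝ := (μ A).toReal with hq_def
  have hq0 : 0 < q := hq
  have hμA0 : μ A ≠ 0 := by
    intro h0; rw [hq_def, h0] at hq0; simp at hq0
  set ν : Measure Ω := ProbabilityTheory.cond μ A with hν_def
  have hν : IsProbabilityMeasure ν := cond_isProbabilityMeasure hμA0
  have hπ : (0:ℝ) < Real.sqrt Real.pi := Real.sqrt_pos.2 Real.pi_pos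
  -- basic measurability and integrability of cos/sin compositions
  have hcos_meas : ∀ (t : ℝ) (Z : Ω → ℝ), Measurable Z →
      Measurable fun ω => Real.cos (t * Z ω) :=
    fun t Z hZ => Real.continuous_cos.measurable.comp (measurable_const.mul hZ)
  have hsin_meas : ∀ (t : ℝ) (Z : Ω → ℝ), Measurable Z →
      Measurable fun ω => Real.sin (t * Z ω) :=
    fun t Z hZ => Real.continuous_sin.measurable.comp (measurable_const.mul hZ)
  have hcos_int : ∀ (t : ℝ) (Z : Ω → ℝ), Measurable Z →
      Integrable (fun ω => Real.cos (t * Z ω)) μ := fun t Z hZ =>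
    aux_integrable_of_bound μ (hcos_meas t Z hZ).aestronglyMeasurable 1
      (fun ω => Real.abs_cos_le_one _)
  have hsin_int : ∀ (t : ℝ) (Z : Ω → ℝ), Measurable Z →
      Integrable (fun ω => Real.sin (t * Z ω)) μ := fun t Z hZ =>
    aux_integrable_of_bound μ (hsin_meas t Z hZ).aestronglyMeasurable 1
      (fun ω => Real.abs_sin_le_one _)
  -- Step A : |φ t|² = E[cos (t (X - X'))]
  have hsq : ∀ t : ℝ, (‖φ t‖)^2 = ∫ ω, Real.cos (t * (X ω - X' ω)) ∂μ := by
    intro t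
    have hphi : φ t
        = ↑(∫ ω, Real.cos (t * X ω) ∂μ) + ↑(∫ ω, Real.sin (t * X ω) ∂μ) * Complex.I := by
      rw [hφ]
      have hpt : ∀ ω, Complex.exp (Complex.I * t * X ω)
          = (↑(Real.cos (t * X ω)) : ℂ) + ↑(Real.sin (t * X ω)) * Complex.I := by
        intro ω
        rw [show Complex.I * (t:ℂ) * (X ω : ℂ) = ((t * X ω : ℝ) : ℂ) * Complex.I by
          push_cast; ring, Complex.exp_mul_I, Complex.ofReal_cos, Complex.ofReal_sin]
      simp_rw [hpt]
      have i1 : Integrable (fun ω => (Real.cos (t * X ω) : ℂ)) μ := (hcos_int t X hX).ofReal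
      have i2 : Integrable (fun ω => (Real.sin (t * X ω) : ℂ) * Complex.I) μ :=
        ((hsin_int t X hX).ofReal).mul_const Complex.I
      rw [integral_add i1 i2, integral_mul_const]
      congr 1
      · exact integral_ofReal
      · congr 1
        exact integral_ofReal
    have hswap : ∀ f : ℝ → ℝ, Continuous f →
        ∫ ω, f (X' ω) ∂μ = ∫ ω, f (X ω) ∂μ := by
      intro f hf
      rw [← integral_map hX'.aemeasurable (hf.aestronglyMeasurable), ← hid,
        integral_map hX.aemeasurable (hf.aestronglyMeasurable)]
    have hcos_swap : ∫ ω, Real.cos (t * X' ω) ∂μ = ∫ ω, Real.cos (t * X ω) ∂μ :=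
      hswap (fun x => Real.cos (t * x))
        (Real.continuous_cos.comp (continuous_const.mul continuous_id))
    have hsin_swap : ∫ ω, Real.sin (t * X' ω) ∂μ = ∫ ω, Real.sin (t * X ω) ∂μ :=
      hswap (fun x => Real.sin (t * x))
        (Real.continuous_sin.comp (continuous_const.mul continuous_id))
    have hindcos : IndepFun (fun ω => Real.cos (t * X ω)) (fun ω => Real.cos (t * X' ω)) μ :=
      hindep.comp (Real.continuous_cos.measurable.comp (measurable_const.mul measurable_id))
        (Real.continuous_cos.measurable.comp (measurable_const.mul measurable_id))
    have hindsin : IndepFun (fun ω => Real.sin (t * X ω)) (fun ω => Real.sin (t * X' ω)) μ :=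
      hindep.comp (Real.continuous_sin.measurable.comp (measurable_const.mul measurable_id))
        (Real.continuous_sin.measurable.comp (measurable_const.mul measurable_id))
    have hmulcos : ∫ ω, Real.cos (t * X ω) * Real.cos (t * X' ω) ∂μ
        = (∫ ω, Real.cos (t * X ω) ∂μ) * ∫ ω, Real.cos (t * X' ω) ∂μ :=
      hindcos.integral_mul_eq_mul_integral (hcos_int t X hX).aestronglyMeasurable (hcos_int t X' hX').aestronglyMeasurable
    have hmulsin : ∫ ω, Real.sin (t * X ω) * Real.sin (t * X' ω) ∂μ
        = (∫ ω, Real.sin (t * X ω) ∂μ) * ∫ ω, Real.sin (t * X' ω) ∂μ :=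
      hindsin.integral_mul_eq_mul_integral (hsin_int t X hX).aestronglyMeasurable (hsin_int t X' hX').aestronglyMeasurable
    have hexpand : ∀ ω, Real.cos (t * (X ω - X' ω))
        = Real.cos (t * X ω) * Real.cos (t * X' ω)
          + Real.sin (t * X ω) * Real.sin (t * X' ω) := by
      intro ω; rw [mul_sub, Real.cos_sub]
    have hintprod1 : Integrable (fun ω => Real.cos (t * X ω) * Real.cos (t * X' ω)) μ :=
      aux_integrable_of_bound μ
        ((hcos_meas t X hX).mul (hcos_meas t X' hX')).aestronglyMeasurable 1
        (fun ω => by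
          rw [abs_mul]
          exact mul_le_one₀ (Real.abs_cos_le_one _) (abs_nonneg _) (Real.abs_cos_le_one _))
    have hintprod2 : Integrable (fun ω => Real.sin (t * X ω) * Real.sin (t * X' ω)) μ :=
      aux_integrable_of_bound μ
        ((hsin_meas t X hX).mul (hsin_meas t X' hX')).aestronglyMeasurable 1
        (fun ω => by
          rw [abs_mul]
          exact mul_le_one₀ (Real.abs_sin_le_one _) (abs_nonneg _) (Real.abs_sin_le_one _))
    calc (‖φ t‖)^2
        = (∫ ω, Real.cos (t * X ω) ∂μ)^2 + (∫ ω, Real.sin (t * X ω) ∂μ)^2 := by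
          rw [Complex.sq_norm, hphi, Complex.normSq_add_mul_I]
      _ = ∫ ω, Real.cos (t * (X ω - X' ω)) ∂μ := by
          simp_rw [hexpand]
          rw [integral_add hintprod1 hintprod2, hmulcos, hmulsin, hcos_swap, hsin_swap]
          ring
  -- trivial bound |φ t| ≤ 1
  have habs1 : ∀ t : ℝ, ‖φ t‖ ≤ 1 := by
    intro t
    rw [hφ]
    calc ‖∫ ω, Complex.exp (Complex.I * t * X ω) ∂μ‖
        ≤ ∫ ω, ‖Complex.exp (Complex.I * t * X ω)‖ ∂μ := by
          simpa using
            norm_integral_le_integral_norm (fun ω => Complex.exp (Complex.I * t * X ω))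
      _ = 1 := by
          have h1 : ∀ ω, ‖Complex.exp (Complex.I * t * X ω)‖ = 1 := fun ω => by
            simp [Complex.norm_exp]
          simp [h1]
  -- Step B : |φ t| ≤ exp (-(1/2) ∫_A (1 - cos (t (X-X'))))
  have habs : ∀ t : ℝ, ‖φ t‖ ≤
      Real.exp (-(1/2) * ∫ ω in A, (1 - Real.cos (t * (X ω - X' ω))) ∂μ) := by
    intro t
    have hcosY : Integrable (fun ω => Real.cos (t * (X ω - X' ω))) μ :=
      hcos_int t (fun ω => X ω - X' ω) (hX.sub hX')
    have honemcos : Integrable (fun ω => 1 - Real.cos (t * (X ω - X' ω))) μ :=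
      (integrable_const 1).sub hcosY
    have h1 : ∫ ω in A, (1 - Real.cos (t * (X ω - X' ω))) ∂μ
        ≤ ∫ ω, (1 - Real.cos (t * (X ω - X' ω))) ∂μ :=
      setIntegral_le_integral honemcos (Filter.Eventually.of_forall fun ω => by
        simp [Real.cos_le_one])
    have h2 : ∫ ω, (1 - Real.cos (t * (X ω - X' ω))) ∂μ = 1 - (‖φ t‖)^2 := by
      rw [integral_sub (integrable_const 1) hcosY, integral_const, hsq t]
      simp
    set a : ℝ := ‖φ t‖ with ha
    have key : a ≤ Real.exp ((a^2 - 1)/2) := by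
      have k1 : a ≤ Real.exp (a - 1) := by
        have := Real.add_one_le_exp (a - 1); linarith
      have k2 : Real.exp (a - 1) ≤ Real.exp ((a^2 - 1)/2) :=
        Real.exp_le_exp.2 (by nlinarith [sq_nonneg (a - 1)])
      exact k1.trans k2
    refine key.trans (Real.exp_le_exp.2 ?_)
    have := h1.trans_eq h2
    linarith
  -- conditional measure identity
  have hcond : ∀ g : Ω → ℝ, ∫ ω in A, g ω ∂μ = q * ∫ ω, g ω ∂ν := by
    intro g
    rw [hν_def, ProbabilityTheory.cond, integral_smul_measure, ENNReal.toReal_inv, smul_eq_mul,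
      ← mul_assoc, ← hq_def, mul_inv_cancel₀ hq0.ne', one_mul]
  -- Step C : product bound and Jensen
  have hprod : ∀ η : ℝ, (∏ k, ‖φ (b k * η)‖) ≤
      ∫ ω, Real.exp (-(q / 2 * ∑ k, (1 - Real.cos (b k * η * (X ω - X' ω))))) ∂ν := by
    intro η
    have hmeasY : Measurable fun ω => X ω - X' ω := hX.sub hX'
    have hterm_meas : ∀ k : Fin n, Measurable fun ω => 1 - Real.cos (b k * η * (X ω - X' ω)) :=
      fun k => measurable_const.sub
        (Real.continuous_cos.measurable.comp (measurable_const.mul hmeasY))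
    have hterm_int : ∀ k : Fin n,
        Integrable (fun ω => 1 - Real.cos (b k * η * (X ω - X' ω))) μ := fun k =>
      (integrable_const 1).sub (hcos_int (b k * η) (fun ω => X ω - X' ω) hmeasY)
    have step1 : (∏ k, ‖φ (b k * η)‖) ≤
        Real.exp (-(1/2) * ∫ ω in A, (∑ k, (1 - Real.cos (b k * η * (X ω - X' ω)))) ∂μ) := by
      calc (∏ k, ‖φ (b k * η)‖)
          ≤ ∏ k, Real.exp (-(1/2) * ∫ ω in A, (1 - Real.cos (b k * η * (X ω - X' ω))) ∂μ) :=
            Finset.prod_le_prod (fun k _ => norm_nonneg _)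
              (fun k _ => habs (b k * η))
        _ = Real.exp (∑ k, -(1/2) * ∫ ω in A, (1 - Real.cos (b k * η * (X ω - X' ω))) ∂μ) :=
            (Real.exp_sum _ _).symm
        _ = Real.exp (-(1/2) * ∑ k, ∫ ω in A, (1 - Real.cos (b k * η * (X ω - X' ω))) ∂μ) := by
            rw [← Finset.mul_sum]
        _ = Real.exp (-(1/2) * ∫ ω in A, (∑ k, (1 - Real.cos (b k * η * (X ω - X' ω)))) ∂μ) := by
            rw [integral_finset_sum _ (fun k _ => (hterm_int k).integrableOn)]
    have step2 : -(1/2) * ∫ ω in A, (∑ k, (1 - Real.cos (b k * η * (X ω - X' ω)))) ∂μ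
        = -∫ ω, q / 2 * ∑ k, (1 - Real.cos (b k * η * (X ω - X' ω))) ∂ν := by
      rw [hcond, integral_const_mul]; ring
    have hsum_meas : Measurable fun ω => q / 2 * ∑ k, (1 - Real.cos (b k * η * (X ω - X' ω))) :=
      (Finset.measurable_sum _ (fun k _ => hterm_meas k)).const_mul _
    have hsum_bounds : ∀ ω, 0 ≤ q / 2 * ∑ k, (1 - Real.cos (b k * η * (X ω - X' ω))) ∧
        q / 2 * ∑ k, (1 - Real.cos (b k * η * (X ω - X' ω))) ≤ q * n := by
      intro ω
      have h0 : ∀ k : Fin n, 0 ≤ 1 - Real.cos (b k * η * (X ω - X' ω)) := fun k => by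
        linarith [Real.cos_le_one (b k * η * (X ω - X' ω))]
      have h2 : ∀ k : Fin n, 1 - Real.cos (b k * η * (X ω - X' ω)) ≤ 2 := fun k => by
        linarith [Real.neg_one_le_cos (b k * η * (X ω - X' ω))]
      have hs0 : 0 ≤ ∑ k, (1 - Real.cos (b k * η * (X ω - X' ω))) :=
        Finset.sum_nonneg fun k _ => h0 k
      have hs2 : ∑ k, (1 - Real.cos (b k * η * (X ω - X' ω))) ≤ 2 * n := by
        calc ∑ k, (1 - Real.cos (b k * η * (X ω - X' ω)))
            ≤ ∑ _k : Fin n, (2:ℝ) := Finset.sum_le_sum fun k _ => h2 k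
          _ = 2 * n := by simp [mul_comm]
      constructor
      · positivity
      · nlinarith
    have step3 := aux_exp_neg_integral_le ν
      (fun ω => q / 2 * ∑ k, (1 - Real.cos (b k * η * (X ω - X' ω))))
      hsum_meas.aestronglyMeasurable (q * n)
      (fun ω => (hsum_bounds ω).1) (fun ω => (hsum_bounds ω).2)
    calc (∏ k, ‖φ (b k * η)‖)
        ≤ Real.exp (-(1/2) * ∫ ω in A, (∑ k, (1 - Real.cos (b k * η * (X ω - X' ω)))) ∂μ) :=
          step1
      _ = Real.exp (-∫ ω, q / 2 * ∑ k, (1 - Real.cos (b k * η * (X ω - X' ω))) ∂ν) := by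
          rw [step2]
      _ ≤ ∫ ω, Real.exp (-(q / 2 * ∑ k, (1 - Real.cos (b k * η * (X ω - X' ω))))) ∂ν := step3
    -- gaussian weight
  have hGint : Integrable (fun η : ℝ => Real.exp (-η ^ 2) / Real.sqrt Real.pi) := by
    have h1 : Integrable (fun η : ℝ => Real.exp (-1 * η ^ 2)) := integrable_exp_neg_mul_sq one_pos
    simpa [neg_mul, one_mul] using h1.div_const (Real.sqrt Real.pi)
  have hGval : (∫ η : ℝ, Real.exp (-η ^ 2) / Real.sqrt Real.pi) = 1 := by
    rw [integral_div]
    have : (∫ η : ℝ, Real.exp (-η ^ 2)) = ∫ η : ℝ, Real.exp (-1 * η ^ 2) := by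
      congr 1; funext η; ring_nf
    rw [this, integral_gaussian, div_one, div_self hπ.ne']
  -- the integrand on the product space
  have hg0 : ∀ (η : ℝ) (y : ℝ), 0 ≤ q / 2 * ∑ k, (1 - Real.cos (b k * η * y)) := by
    intro η y
    have : 0 ≤ ∑ k, (1 - Real.cos (b k * η * y)) :=
      Finset.sum_nonneg fun k _ => by linarith [Real.cos_le_one (b k * η * y)]
    positivity
  have hFmeas : Measurable (fun p : ℝ × Ω =>
      Real.exp (-(q / 2 * ∑ k, (1 - Real.cos (b k * p.1 * (X p.2 - X' p.2)))) - p.1 ^ 2) /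
        Real.sqrt Real.pi) := by
    apply Measurable.div_const
    apply Real.continuous_exp.measurable.comp
    apply Measurable.sub
    · apply Measurable.neg
      apply Measurable.const_mul
      apply Finset.measurable_sum
      intro k _
      exact measurable_const.sub (Real.continuous_cos.measurable.comp
        ((measurable_const.mul measurable_fst).mul
          ((hX.comp measurable_snd).sub (hX'.comp measurable_snd))))
    · exact measurable_fst.pow_const 2
  have hFle : ∀ (η : ℝ) (ω : Ω),
      Real.exp (-(q / 2 * ∑ k, (1 - Real.cos (b k * η * (X ω - X' ω)))) - η ^ 2) /
        Real.sqrt Real.pi ≤ Real.exp (-η ^ 2) / Real.sqrt Real.pi := by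
    intro η ω
    gcongr
    linarith [hg0 η (X ω - X' ω)]
  have hFint : Integrable (fun p : ℝ × Ω =>
      Real.exp (-(q / 2 * ∑ k, (1 - Real.cos (b k * p.1 * (X p.2 - X' p.2)))) - p.1 ^ 2) /
        Real.sqrt Real.pi) ((volume : Measure ℝ).prod ν) := by
    rw [integrable_prod_iff hFmeas.aestronglyMeasurable]
    constructor
    · refine Filter.Eventually.of_forall fun η => ?_
      refine aux_integrable_of_bound ν
        ((hFmeas.comp (measurable_prodMk_left (x := η))).aestronglyMeasurable)
        (Real.exp (-η ^ 2) / Real.sqrt Real.pi) fun ω => ?_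
      rw [abs_of_pos (by positivity)]
      exact hFle η ω
    · refine Integrable.mono' hGint
        ((hFmeas.norm.aestronglyMeasurable).integral_prod_right') ?_
      refine Filter.Eventually.of_forall fun η => ?_
      have hnn : 0 ≤ ∫ ω, ‖Real.exp (-(q / 2 *
          ∑ k, (1 - Real.cos (b k * η * (X ω - X' ω)))) - η ^ 2) / Real.sqrt Real.pi‖ ∂ν :=
        integral_nonneg fun ω => norm_nonneg _
      rw [Real.norm_of_nonneg hnn]
      calc (∫ ω, ‖Real.exp (-(q / 2 *
            ∑ k, (1 - Real.cos (b k * η * (X ω - X' ω)))) - η ^ 2) / Real.sqrt Real.pi‖ ∂ν)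
          ≤ ∫ _ω, Real.exp (-η ^ 2) / Real.sqrt Real.pi ∂ν := by
            refine integral_mono (Integrable.norm ?_) (integrable_const _) fun ω => ?_
            · exact aux_integrable_of_bound ν
                ((hFmeas.comp (measurable_prodMk_left (x := η))).aestronglyMeasurable)
                (Real.exp (-η ^ 2) / Real.sqrt Real.pi) fun ω => by
                  rw [abs_of_pos (by positivity)]; exact hFle η ω
            · rw [Real.norm_of_nonneg (by positivity)]
              exact hFle η ω
        _ = Real.exp (-η ^ 2) / Real.sqrt Real.pi := by
            rw [integral_const]; simp
  -- measurability of φ and of the LHS integrand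
  have hφm : Measurable φ := by
    have hjoint : StronglyMeasurable fun p : ℝ × Ω => Complex.exp (Complex.I * p.1 * X p.2) :=
      (Complex.continuous_exp.measurable.comp
        ((measurable_const.mul (Complex.measurable_ofReal.comp measurable_fst)).mul
          (Complex.measurable_ofReal.comp (hX.comp measurable_snd)))).stronglyMeasurable
    have hint := hjoint.integral_prod_right' (ν := μ)
    have heq : φ = fun t : ℝ => ∫ ω, Complex.exp (Complex.I * t * X ω) ∂μ := funext hφ
    rw [heq]; exact hint.measurable
  have hLHSmeas : Measurable fun η : ℝ =>
      (∏ k, ‖φ (b k * η)‖) * Real.exp (-η ^ 2) / Real.sqrt Real.pi := by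
    apply Measurable.div_const
    refine Measurable.mul ?_ (Real.continuous_exp.measurable.comp
      ((measurable_id.pow_const 2).neg))
    exact Finset.measurable_prod _ fun k _ =>
      continuous_norm.measurable.comp (hφm.comp (measurable_id.const_mul (b k)))
  have hprod_le_one : ∀ η : ℝ, (∏ k, ‖φ (b k * η)‖) ≤ 1 := fun η =>
    Finset.prod_le_one (fun k _ => norm_nonneg _) (fun k _ => habs1 _)
  have hLHSint : Integrable (fun η : ℝ =>
      (∏ k, ‖φ (b k * η)‖) * Real.exp (-η ^ 2) / Real.sqrt Real.pi) := by
    refine Integrable.mono' hGint hLHSmeas.aestronglyMeasurable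
      (Filter.Eventually.of_forall fun η => ?_)
    have h0 : 0 ≤ ∏ k, ‖φ (b k * η)‖ :=
      Finset.prod_nonneg fun k _ => norm_nonneg _
    rw [Real.norm_of_nonneg (by positivity)]
    calc (∏ k, ‖φ (b k * η)‖) * Real.exp (-η ^ 2) / Real.sqrt Real.pi
        ≤ 1 * Real.exp (-η ^ 2) / Real.sqrt Real.pi := by
          gcongr
          exact hprod_le_one η
      _ = Real.exp (-η ^ 2) / Real.sqrt Real.pi := by ring
  -- pointwise inequality in η
  have hJ : ∀ η : ℝ, (∏ k, ‖φ (b k * η)‖) * Real.exp (-η ^ 2) / Real.sqrt Real.pi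
      ≤ ∫ ω, Real.exp (-(q / 2 * ∑ k, (1 - Real.cos (b k * η * (X ω - X' ω)))) - η ^ 2) /
          Real.sqrt Real.pi ∂ν := by
    intro η
    have hc : (0:ℝ) ≤ Real.exp (-η ^ 2) / Real.sqrt Real.pi := by positivity
    calc (∏ k, ‖φ (b k * η)‖) * Real.exp (-η ^ 2) / Real.sqrt Real.pi
        = (∏ k, ‖φ (b k * η)‖) * (Real.exp (-η ^ 2) / Real.sqrt Real.pi) := by
          ring
      _ ≤ (∫ ω, Real.exp (-(q / 2 * ∑ k, (1 - Real.cos (b k * η * (X ω - X' ω))))) ∂ν) *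
            (Real.exp (-η ^ 2) / Real.sqrt Real.pi) :=
          mul_le_mul_of_nonneg_right (hprod η) hc
      _ = ∫ ω, Real.exp (-(q / 2 * ∑ k, (1 - Real.cos (b k * η * (X ω - X' ω))))) *
            (Real.exp (-η ^ 2) / Real.sqrt Real.pi) ∂ν := (integral_mul_const _ _).symm
      _ = ∫ ω, Real.exp (-(q / 2 * ∑ k, (1 - Real.cos (b k * η * (X ω - X' ω)))) - η ^ 2) /
            Real.sqrt Real.pi ∂ν := by
          congr 1; funext ω
          rw [mul_div_assoc', ← Real.exp_add, ← sub_eq_add_neg]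
  -- supremum notation
  set S : ℝ := ⨆ z : {z : ℝ // 2 ≤ z},
      ∫ η : ℝ, Real.exp (-(q / 2 * ∑ k, (1 - Real.cos (b k * η * (z:ℝ)))) - η ^ 2) /
        Real.sqrt Real.pi with hS
  have hIle : ∀ z : ℝ,
      (∫ η : ℝ, Real.exp (-(q / 2 * ∑ k, (1 - Real.cos (b k * η * z))) - η ^ 2) /
        Real.sqrt Real.pi) ≤ 1 := by
    intro z
    have hcont : Continuous fun η : ℝ =>
        Real.exp (-(q / 2 * ∑ k, (1 - Real.cos (b k * η * z))) - η ^ 2) /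
          Real.sqrt Real.pi := by
      apply Continuous.div_const
      apply Real.continuous_exp.comp
      apply Continuous.sub
      · exact (continuous_const.mul (continuous_finset_sum _ fun k _ =>
          continuous_const.sub (Real.continuous_cos.comp
            ((continuous_const.mul continuous_id).mul continuous_const)))).neg
      · exact continuous_pow 2
    have hintz : Integrable (fun η : ℝ =>
        Real.exp (-(q / 2 * ∑ k, (1 - Real.cos (b k * η * z))) - η ^ 2) /
          Real.sqrt Real.pi) := by
      refine Integrable.mono' hGint hcont.measurable.aestronglyMeasurable
        (Filter.Eventually.of_forall fun η => ?_)
      rw [Real.norm_of_nonneg (by positivity)]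
      gcongr
      linarith [hg0 η z]
    calc (∫ η : ℝ, Real.exp (-(q / 2 * ∑ k, (1 - Real.cos (b k * η * z))) - η ^ 2) /
          Real.sqrt Real.pi)
        ≤ ∫ η : ℝ, Real.exp (-η ^ 2) / Real.sqrt Real.pi := by
          refine integral_mono hintz hGint fun η => ?_
          gcongr
          linarith [hg0 η z]
      _ = 1 := hGval
  have hBdd : BddAbove (Set.range fun z : {z : ℝ // 2 ≤ z} =>
      ∫ η : ℝ, Real.exp (-(q / 2 * ∑ k, (1 - Real.cos (b k * η * (z:ℝ)))) - η ^ 2) /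
        Real.sqrt Real.pi) := by
    refine ⟨1, ?_⟩
    rintro _ ⟨z, rfl⟩
    exact hIle z
  -- a.e. everything in A
  have hae : ∀ᵐ ω ∂ν, 2 ≤ |X ω - X' ω| := by
    rw [hν_def, ProbabilityTheory.cond]
    refine Measure.ae_smul_measure ?_ _
    filter_upwards [ae_restrict_mem hA] with ω hω
    rw [hA_def] at hω
    exact hω
  have haeb : ∀ᵐ ω ∂ν,
      (∫ η : ℝ, Real.exp (-(q / 2 * ∑ k, (1 - Real.cos (b k * η * (X ω - X' ω)))) - η ^ 2) /
        Real.sqrt Real.pi) ≤ S := by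
    filter_upwards [hae] with ω hω
    have heq : (∫ η : ℝ, Real.exp (-(q / 2 *
          ∑ k, (1 - Real.cos (b k * η * (X ω - X' ω)))) - η ^ 2) / Real.sqrt Real.pi)
        = ∫ η : ℝ, Real.exp (-(q / 2 *
          ∑ k, (1 - Real.cos (b k * η * |X ω - X' ω|))) - η ^ 2) / Real.sqrt Real.pi := by
      rcases abs_cases (X ω - X' ω) with ⟨h, _⟩ | ⟨h, _⟩
      · rw [h]
      · rw [h]
        simp_rw [mul_neg, Real.cos_neg]
    rw [heq, hS]
    exact le_ciSup hBdd ⟨|X ω - X' ω|, hω⟩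
  -- put everything together
  calc (∫ η : ℝ, (∏ k, ‖φ (b k * η)‖) * Real.exp (-η ^ 2) / Real.sqrt Real.pi)
      ≤ ∫ η : ℝ, (∫ ω, Real.exp (-(q / 2 *
          ∑ k, (1 - Real.cos (b k * η * (X ω - X' ω)))) - η ^ 2) / Real.sqrt Real.pi ∂ν) :=
        integral_mono hLHSint hFint.integral_prod_left hJ
    _ = ∫ ω, (∫ η : ℝ, Real.exp (-(q / 2 *
          ∑ k, (1 - Real.cos (b k * η * (X ω - X' ω)))) - η ^ 2) / Real.sqrt Real.pi) ∂ν :=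
        integral_integral_swap hFint
    _ ≤ ∫ _ω, S ∂ν := integral_mono_ae hFint.integral_prod_right (integrable_const S) haeb
    _ = S := by rw [integral_const]; simp
end
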